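/- Let S₁, S₂ : ℂ^X → ℂ^X be invertible linear operators, W₁, W₂ : X³ → ℂ, and set 𝒲_j(φ₁,φ₂)(x) = Σ_{y,z∈X} W_j(x,y,z)φ₁(y)φ₂(z). Let κ > 0 and K > 0, set S̄ = max{‖S₁‖_G, ‖S₂‖_G} and W̄ = max{‖W₁‖_G, ‖W₂‖_G}, and assume S̄²·W̄·κ < 1/(2K). Let α₁, α₂ ∈ ℂ^X and suppose (φ₁,φ₂) and (φ₁',φ₂') are two pairs of fields satisfying S₁^{-1}φ₁ + 𝒲₁(φ₁,φ₂) = α₁ and S₂^{-1}φ₂ + 𝒲₂(φ₁,φ₂) = α₂ (and likewise for the primed pair), with max_{x∈X}|(S_j^{-1}φ_j)(x)| ≤ Kκ and max_{x∈X}|(S_j^{-1}φ_j')(x)| ≤ Kκ for j = 1,2. Then φ₁ = φ₁' and φ₂ = φ₂'. -/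

import Mathlib

open scoped BigOperators ENNReal Classical

namespace BFKT

noncomputable section

variable {X : Type*}

/-- Tuples of points of `X` with prescribed multi-length `n`. -/
abbrev Tup (X : Type*) {s : ℕ} (n : Fin s → ℕ) := (j : Fin s) → Fin (n j) → X

/-- Pass from a tuple to the associated family of lists. -/
def toLists {s : ℕ} {n : Fin s → ℕ} (v : Tup X n) : Fin s → List X :=
  fun j => List.ofFn (v j)

/-- The set of points of `X` occurring in one of the lists. -/
def supp [DecidableEq X] {s : ℕ} (l : Fin s → List X) : Finset X :=
  Finset.univ.biUnion fun j => (l j).toFinset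

/-- The weight system with tree-weight `G` and constant weight factors `κ`. -/
def wt [DecidableEq X] (G : Finset X → ℝ) {s : ℕ} (κ : Fin s → ℝ) (l : Fin s → List X) : ℝ :=
  (∏ j, κ j ^ (l j).length) * G (supp l)

/-- A coefficient system is symmetric if it is invariant under permutation of the
components of each of its list arguments. -/
def IsSymm {s : ℕ} (a : (Fin s → List X) → ℂ) : Prop :=
  ∀ (l : Fin s → List X) (j : Fin s) (l' : List X),
    (l j).Perm l' → a (Function.update l j l') = a l

/-- The norm `‖f‖_w` of an analytic function with (symmetric) coefficient system `a`. -/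
def coefNorm [Fintype X] [DecidableEq X] (G : Finset X → ℝ) {s : ℕ}
    (κ : Fin s → ℝ) (a : (Fin s → List X) → ℂ) : ℝ≥0∞ :=
  ENNReal.ofReal (norm (a fun _ => [])) +
  ∑' n : Fin s → ℕ,
    if 1 ≤ ∑ j, n j then
      ⨆ (x : X) (j : Fin s) (_ : n j ≠ 0) (i : Fin (n j)),
        ∑ v : Tup X n,
          if v j i = x then
            ENNReal.ofReal (norm (a (toLists v)) * wt G κ (toLists v))
          else 0
    else 0

/-- `A` is an `s`-field map kernel: it vanishes on the empty tuple. -/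
def IsKernel {s : ℕ} (A : X → (Fin s → List X) → ℂ) : Prop :=
  ∀ x, A x (fun _ => []) = 0

/-- The `L` part of the field map kernel norm. -/
def kerL [Fintype X] [DecidableEq X] (G : Finset X → ℝ) {s : ℕ} (κ : Fin s → ℝ)
    (A : X → (Fin s → List X) → ℂ) (n : Fin s → ℕ) : ℝ≥0∞ :=
  ⨆ x : X, ∑ v : Tup X n,
    ENNReal.ofReal (norm (A x (toLists v)) * (∏ j, κ j ^ n j)
      * G (insert x (supp (toLists v))))

/-- The `R` part of the field map kernel norm. -/
def kerR [Fintype X] [DecidableEq X] (G : Finset X → ℝ) {s : ℕ} (κ : Fin s → ℝ)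
    (A : X → (Fin s → List X) → ℂ) (n : Fin s → ℕ) : ℝ≥0∞ :=
  ⨆ (x' : X) (j : Fin s) (_ : n j ≠ 0) (i : Fin (n j)),
    ∑ x : X, ∑ v : Tup X n,
      if v j i = x' then
        ENNReal.ofReal (norm (A x (toLists v)) * (∏ j', κ j' ^ n j')
          * G (insert x (supp (toLists v))))
      else 0

/-- The norm `⦀A⦀_w` of an `s`-field map kernel. -/
def kerNorm [Fintype X] [DecidableEq X] (G : Finset X → ℝ) {s : ℕ} (κ : Fin s → ℝ)
    (A : X → (Fin s → List X) → ℂ) : ℝ≥0∞ :=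
  ∑' n : Fin s → ℕ, if 1 ≤ ∑ j, n j then max (kerL G κ A n) (kerR G κ A n) else 0

/-- The field obtained by applying the field map with kernel `A` to the fields `α`. -/
def fmApply [Fintype X] {s : ℕ} (A : X → (Fin s → List X) → ℂ)
    (α : Fin s → X → ℂ) (x : X) : ℂ :=
  ∑' p : Σ n : Fin s → ℕ, Tup X n, A x (toLists p.2) * ∏ j, ∏ i, α j (p.2 j i)

/-- The value of the analytic function with coefficient system `a` at the fields `α`. -/
def fnApply [Fintype X] {s : ℕ} (a : (Fin s → List X) → ℂ)
    (α : Fin s → X → ℂ) : ℂ :=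
  ∑' p : Σ n : Fin s → ℕ, Tup X n, a (toLists p.2) * ∏ j, ∏ i, α j (p.2 j i)

/-- The `L^p` norm (for `0 < p ≤ ∞`) of a field on the finite set `X`. -/
def lpNorm [Fintype X] (p : ℝ≥0∞) (α : X → ℂ) : ℝ :=
  if p = ∞ then ⨆ x, norm (α x)
  else (∑ x, norm (α x) ^ p.toReal) ^ (1 / p.toReal)

/-- Symmetrization of a coefficient system. -/
def symmetrize {s : ℕ} (a : (Fin s → List X) → ℂ) : (Fin s → List X) → ℂ :=
  fun l =>
    (((∏ j, Nat.factorial (l j).length : ℕ) : ℂ))⁻¹ *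
      ∑ e : (j : Fin s) → Equiv.Perm (Fin (l j).length),
        a fun j => List.ofFn fun i => (l j).get (e j i)

/-- Ordered concatenation of the pieces `q (j,k)`, in lexicographic order of `(j,k)`. -/
def concatPieces {r : ℕ} (m : Fin r → ℕ) (q : (Σ j : Fin r, Fin (m j)) → List X) : List X :=
  ((List.finRange r).map fun j => (List.ofFn fun k : Fin (m j) => q ⟨j, k⟩).flatten).flatten

/-- The coefficient system obtained by formally substituting the field map kernels `A j`
into the coefficient system `a` of a function of `r` fields. -/
def substCoef [Fintype X] {r s : ℕ} (a : (Fin r → List X) → ℂ)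
    (A : Fin r → X → (Fin s → List X) → ℂ) : (Fin s → List X) → ℂ :=
  fun l =>
    ∑' m : Fin r → ℕ,
      ∑ y : Tup X m,
        a (toLists y) *
          ∑' q : (i : Fin s) → (Σ j : Fin r, Fin (m j)) → List X,
            if ∀ i, concatPieces m (q i) = l i then
              ∏ j, ∏ k, A j (y j k) (fun i => q i ⟨j, k⟩)
            else 0

/-- The kernel obtained by formally substituting the field map kernels `A j`
into the `r`-field map kernel `B`. -/
def substKer [Fintype X] {r s : ℕ} (B : X → (Fin r → List X) → ℂ)
    (A : Fin r → X → (Fin s → List X) → ℂ) : X → (Fin s → List X) → ℂ :=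
  fun x l => substCoef (B x) A l

/-- Total length of the last `r` list arguments of an `(s+r)`-field map kernel argument. -/
def lastLen {X : Type*} {s r : ℕ} (l : Fin (s + r) → List X) : ℕ :=
  ∑ j : Fin r, (l (Fin.natAdd s j)).length

/-- `B` has minimum degree at least `d` in its last `r` arguments. -/
def MinDeg {s r : ℕ} (B : X → (Fin (s + r) → List X) → ℂ) (d : ℕ) : Prop :=
  ∀ x l, lastLen (s := s) (r := r) l < d → B x l = 0

/-- `B` has maximum degree at most `d` in its last `r` arguments. -/
def MaxDeg {s r : ℕ} (B : X → (Fin (s + r) → List X) → ℂ) (d : ℕ) : Prop :=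
  ∀ x l, d < lastLen (s := s) (r := r) l → B x l = 0

/-- The restriction `B_{n_{s+1},…,n_{s+r}}`. -/
def restrictDeg {s r : ℕ} (B : X → (Fin (s + r) → List X) → ℂ) (n : Fin r → ℕ) :
    X → (Fin (s + r) → List X) → ℂ :=
  fun x l => if ∀ j, (l (Fin.natAdd s j)).length = n j then B x l else 0

/-- The primed norm `⦀B⦀'_{w_{κ,λ}}`. -/
def kerNorm' [Fintype X] [DecidableEq X] (G : Finset X → ℝ) {s r : ℕ}
    (kl : Fin (s + r) → ℝ) (B : X → (Fin (s + r) → List X) → ℂ) : ℝ≥0∞ :=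
  ∑' n : Fin r → ℕ, (∑ j, n j : ℕ) * kerNorm G kl (restrictDeg B n)

/-- The norm of an `r`-tuple of `s`-field maps, as element of the Banach space `𝓑`. -/
def tupleNorm [Fintype X] [DecidableEq X] (G : Finset X → ℝ) {s r : ℕ}
    (κ : Fin s → ℝ) (lam : Fin r → ℝ)
    (Γ : Fin r → X → (Fin s → List X) → ℂ) : ℝ≥0∞ :=
  ⨆ j, kerNorm G κ (Γ j) / ENNReal.ofReal (lam j)

/-- The kernel of the coordinate field map `(α₁,…,α_s) ↦ α_i`. -/
def projKer [DecidableEq X] {s : ℕ} (i : Fin s) : X → (Fin s → List X) → ℂ :=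
  fun x l => if l = Function.update (fun _ => ([] : List X)) i [x] then 1 else 0

/-- The family of maps substituted into an `(s+r)`-field map when composing with
an `r`-tuple `Γ` of `s`-field maps: the first `s` arguments are left alone. -/
def extendMaps [DecidableEq X] {s r : ℕ}
    (Γ : Fin r → X → (Fin s → List X) → ℂ) :
    Fin (s + r) → X → (Fin s → List X) → ℂ :=
  Fin.addCases (fun i => projKer i) Γ

/-- The kernel of the `s`-field map `B̃(Γ⃗)(α⃗) = B(α⃗, Γ⃗(α⃗))`. -/
def tildeKer [Fintype X] [DecidableEq X] {s r : ℕ}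
    (B : X → (Fin (s + r) → List X) → ℂ)
    (Γ : Fin r → X → (Fin s → List X) → ℂ) : X → (Fin s → List X) → ℂ :=
  substKer B (extendMaps Γ)

end

/-- The `G`-weighted `ℓ¹`–`ℓ^∞` norm of a linear operator on `ℂ^X`. -/
noncomputable def opNormG {X : Type*} [Fintype X] [DecidableEq X] (G : Finset X → ℝ)
    (S : Matrix X X ℂ) : ℝ :=
  max (⨆ y, ∑ x, norm (S x y) * G {x, y})
    (⨆ x, ∑ y, norm (S x y) * G {x, y})

/-- The `G`-weighted norm of a three-point interaction `W`. -/
noncomputable def wNormG {X : Type*} [Fintype X] [DecidableEq X] (G : Finset X → ℝ)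
    (W : X → X → X → ℂ) : ℝ :=
  max (⨆ x, ∑ y, ∑ z, norm (W x y z) * G {x, y, z})
    (max (⨆ y, ∑ x, ∑ z, norm (W x y z) * G {x, y, z})
      (⨆ z, ∑ x, ∑ y, norm (W x y z) * G {x, y, z}))

/-- `𝒲(φ₁,φ₂)(x) = Σ_{y,z} W(x,y,z) φ₁(y) φ₂(z)`. -/
noncomputable def Wapp {X : Type*} [Fintype X] (W : X → X → X → ℂ)
    (φ₁ φ₂ : X → ℂ) (x : X) : ℂ :=
  ∑ y, ∑ z, W x y z * φ₁ y * φ₂ z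

lemma le_ciSup_fin {X : Type*} [Fintype X] [Nonempty X] (f : X → ℝ) (x : X) :
    f x ≤ ⨆ y, f y :=
  le_ciSup (Set.Finite.bddAbove (Set.finite_range f)) x

/-- Corollary III.17 (uniqueness): solutions of the background field equations are
unique among pairs `(φ₁,φ₂)` with `max_x |(S_j⁻¹φ_j)(x)| ≤ Kκ`. -/
theorem statement15 {X : Type*} [Fintype X] [DecidableEq X] [Nonempty X]
    (G : Finset X → ℝ)
    (hG1 : ∀ S : Finset X, 1 ≤ G S)
    (hGsing : ∀ S : Finset X, S.card ≤ 1 → G S = 1)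
    (hGmono : ∀ S T : Finset X, S ⊆ T → G S ≤ G T)
    (hGmul : ∀ S T : Finset X, (S ∩ T).Nonempty → G (S ∪ T) ≤ G S * G T)
    (S₁ S₂ : Matrix X X ℂ) (hS₁ : IsUnit S₁) (hS₂ : IsUnit S₂)
    (W₁ W₂ : X → X → X → ℂ)
    (κ K : ℝ) (hκ : 0 < κ) (hK : 0 < K)
    (hsmall : (max (opNormG G S₁) (opNormG G S₂)) ^ 2
        * max (wNormG G W₁) (wNormG G W₂) * κ < 1 / (2 * K))
    (α₁ α₂ φ₁ φ₂ φ₁' φ₂' : X → ℂ)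
    (heq₁ : ∀ x, (S₁⁻¹).mulVec φ₁ x + Wapp W₁ φ₁ φ₂ x = α₁ x)
    (heq₂ : ∀ x, (S₂⁻¹).mulVec φ₂ x + Wapp W₂ φ₁ φ₂ x = α₂ x)
    (heq₁' : ∀ x, (S₁⁻¹).mulVec φ₁' x + Wapp W₁ φ₁' φ₂' x = α₁ x)
    (heq₂' : ∀ x, (S₂⁻¹).mulVec φ₂' x + Wapp W₂ φ₁' φ₂' x = α₂ x)
    (hb₁ : ∀ x, norm ((S₁⁻¹).mulVec φ₁ x) ≤ K * κ)
    (hb₂ : ∀ x, norm ((S₂⁻¹).mulVec φ₂ x) ≤ K * κ)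
    (hb₁' : ∀ x, norm ((S₁⁻¹).mulVec φ₁' x) ≤ K * κ)
    (hb₂' : ∀ x, norm ((S₂⁻¹).mulVec φ₂' x) ≤ K * κ) :
    φ₁ = φ₁' ∧ φ₂ = φ₂' := by
  classical
  set Sb := max (opNormG G S₁) (opNormG G S₂) with hSbdef
  set Wb := max (wNormG G W₁) (wNormG G W₂) with hWbdef
  obtain ⟨x₀⟩ := ‹Nonempty X›
  -- row-sum bounds from the G-weighted norms
  have hrow : ∀ (S : Matrix X X ℂ), opNormG G S ≤ Sb →
      ∀ x, ∑ y, norm (S x y) ≤ Sb := by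
    intro S hS x
    calc ∑ y, norm (S x y)
        ≤ ∑ y, norm (S x y) * G {x, y} :=
          Finset.sum_le_sum fun y _ =>
            le_mul_of_one_le_right (norm_nonneg _) (hG1 _)
      _ ≤ ⨆ x, ∑ y, norm (S x y) * G {x, y} :=
          le_ciSup_fin (fun x => ∑ y, norm (S x y) * G {x, y}) x
      _ ≤ opNormG G S := le_max_right _ _
      _ ≤ Sb := hS
  have hrow₁ := hrow S₁ (le_max_left _ _)
  have hrow₂ := hrow S₂ (le_max_right _ _)
  have hWrow : ∀ (W : X → X → X → ℂ), wNormG G W ≤ Wb →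
      ∀ x, ∑ y, ∑ z, norm (W x y z) ≤ Wb := by
    intro W hW x
    calc ∑ y, ∑ z, norm (W x y z)
        ≤ ∑ y, ∑ z, norm (W x y z) * G {x, y, z} :=
          Finset.sum_le_sum fun y _ => Finset.sum_le_sum fun z _ =>
            le_mul_of_one_le_right (norm_nonneg _) (hG1 _)
      _ ≤ ⨆ x, ∑ y, ∑ z, norm (W x y z) * G {x, y, z} :=
          le_ciSup_fin (fun x => ∑ y, ∑ z, norm (W x y z) * G {x, y, z}) x
      _ ≤ wNormG G W := le_max_left _ _
      _ ≤ Wb := hW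
  have hWrow₁ := hWrow W₁ (le_max_left _ _)
  have hWrow₂ := hWrow W₂ (le_max_right _ _)
  have hSb0 : 0 ≤ Sb :=
    le_trans (Finset.sum_nonneg fun y _ => norm_nonneg _) (hrow₁ x₀)
  have hWb0 : 0 ≤ Wb :=
    le_trans (Finset.sum_nonneg fun y _ => Finset.sum_nonneg fun z _ => norm_nonneg _)
      (hWrow₁ x₀)
  -- abbreviations
  set ψ₁ := (S₁⁻¹).mulVec φ₁ with hψ₁
  set ψ₂ := (S₂⁻¹).mulVec φ₂ with hψ₂
  set ψ₁' := (S₁⁻¹).mulVec φ₁' with hψ₁'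
  set ψ₂' := (S₂⁻¹).mulVec φ₂' with hψ₂'
  -- generic mulVec bound
  have hmv : ∀ (S : Matrix X X ℂ) (v : X → ℂ) (C M : ℝ),
      (∀ x, ∑ y, norm (S x y) ≤ C) → (∀ z, norm (v z) ≤ M) →
      ∀ x, norm (S.mulVec v x) ≤ C * M := by
    intro S v C M hC hM x
    have hM0 : 0 ≤ M := le_trans (norm_nonneg _) (hM x₀)
    calc norm (S.mulVec v x)
        ≤ ∑ y, norm (S x y * v y) := by
          simpa [Matrix.mulVec, dotProduct] using
            norm_sum_le Finset.univ (fun y => S x y * v y)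
      _ = ∑ y, norm (S x y) * norm (v y) := by simp [norm_mul]
      _ ≤ ∑ y, norm (S x y) * M :=
          Finset.sum_le_sum fun y _ =>
            mul_le_mul_of_nonneg_left (hM y) (norm_nonneg _)
      _ = (∑ y, norm (S x y)) * M := by rw [Finset.sum_mul]
      _ ≤ C * M := mul_le_mul_of_nonneg_right (hC x) hM0
  -- recover φ from ψ
  have hdet₁ : IsUnit S₁.det := (Matrix.isUnit_iff_isUnit_det _).mp hS₁
  have hdet₂ : IsUnit S₂.det := (Matrix.isUnit_iff_isUnit_det _).mp hS₂
  have hφ₁ : S₁.mulVec ψ₁ = φ₁ := by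
    rw [hψ₁, Matrix.mulVec_mulVec, Matrix.mul_nonsing_inv _ hdet₁, Matrix.one_mulVec]
  have hφ₂ : S₂.mulVec ψ₂ = φ₂ := by
    rw [hψ₂, Matrix.mulVec_mulVec, Matrix.mul_nonsing_inv _ hdet₂, Matrix.one_mulVec]
  have hφ₁' : S₁.mulVec ψ₁' = φ₁' := by
    rw [hψ₁', Matrix.mulVec_mulVec, Matrix.mul_nonsing_inv _ hdet₁, Matrix.one_mulVec]
  have hφ₂' : S₂.mulVec ψ₂' = φ₂' := by
    rw [hψ₂', Matrix.mulVec_mulVec, Matrix.mul_nonsing_inv _ hdet₂, Matrix.one_mulVec]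
  -- size bounds on φ
  have hφ₁b : ∀ x, norm (φ₁ x) ≤ Sb * (K * κ) := by
    intro x; rw [← hφ₁]; exact hmv S₁ ψ₁ Sb (K * κ) hrow₁ hb₁ x
  have hφ₂b : ∀ x, norm (φ₂ x) ≤ Sb * (K * κ) := by
    intro x; rw [← hφ₂]; exact hmv S₂ ψ₂ Sb (K * κ) hrow₂ hb₂ x
  have hφ₁b' : ∀ x, norm (φ₁' x) ≤ Sb * (K * κ) := by
    intro x; rw [← hφ₁']; exact hmv S₁ ψ₁' Sb (K * κ) hrow₁ hb₁' x
  have hφ₂b' : ∀ x, norm (φ₂' x) ≤ Sb * (K * κ) := by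
    intro x; rw [← hφ₂']; exact hmv S₂ ψ₂' Sb (K * κ) hrow₂ hb₂' x
  -- the deviation
  set D := max (⨆ x, norm (ψ₁ x - ψ₁' x)) (⨆ x, norm (ψ₂ x - ψ₂' x))
    with hDdef
  have hD0 : 0 ≤ D :=
    le_trans (norm_nonneg (ψ₁ x₀ - ψ₁' x₀))
      (le_trans (le_ciSup_fin (fun x => norm (ψ₁ x - ψ₁' x)) x₀) (le_max_left _ _))
  have hD₁ : ∀ x, norm (ψ₁ x - ψ₁' x) ≤ D := fun x =>
    le_trans (le_ciSup_fin (fun x => norm (ψ₁ x - ψ₁' x)) x) (le_max_left _ _)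
  have hD₂ : ∀ x, norm (ψ₂ x - ψ₂' x) ≤ D := fun x =>
    le_trans (le_ciSup_fin (fun x => norm (ψ₂ x - ψ₂' x)) x) (le_max_right _ _)
  -- bounds on φ differences
  have hdφ₁ : ∀ x, norm (φ₁ x - φ₁' x) ≤ Sb * D := by
    intro x
    have h := hmv S₁ (ψ₁ - ψ₁') Sb D hrow₁ (fun z => hD₁ z) x
    rwa [Matrix.mulVec_sub, hφ₁, hφ₁'] at h
  have hdφ₂ : ∀ x, norm (φ₂ x - φ₂' x) ≤ Sb * D := by
    intro x
    have h := hmv S₂ (ψ₂ - ψ₂') Sb D hrow₂ (fun z => hD₂ z) x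
    rwa [Matrix.mulVec_sub, hφ₂, hφ₂'] at h
  -- key contraction estimate
  set c : ℝ := Wb * (Sb * D * (Sb * (K * κ)) + Sb * (K * κ) * (Sb * D)) with hcdef
  have hkey : ∀ (W : X → X → X → ℂ), (∀ x, ∑ y, ∑ z, norm (W x y z) ≤ Wb) →
      ∀ x, norm (Wapp W φ₁' φ₂' x - Wapp W φ₁ φ₂ x) ≤ c := by
    intro W hW x
    have hterm : ∀ y z, norm (W x y z * φ₁' y * φ₂' z - W x y z * φ₁ y * φ₂ z)
        ≤ norm (W x y z) *
          (Sb * D * (Sb * (K * κ)) + Sb * (K * κ) * (Sb * D)) := by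
      intro y z
      have hsplit : W x y z * φ₁' y * φ₂' z - W x y z * φ₁ y * φ₂ z
          = W x y z * ((φ₁' y - φ₁ y) * φ₂' z + φ₁ y * (φ₂' z - φ₂ z)) := by ring
      rw [hsplit, norm_mul]
      refine mul_le_mul_of_nonneg_left ?_ (norm_nonneg _)
      calc norm ((φ₁' y - φ₁ y) * φ₂' z + φ₁ y * (φ₂' z - φ₂ z))
          ≤ norm ((φ₁' y - φ₁ y) * φ₂' z) + norm (φ₁ y * (φ₂' z - φ₂ z)) :=
            norm_add_le _ _
        _ = norm (φ₁' y - φ₁ y) * norm (φ₂' z)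
            + norm (φ₁ y) * norm (φ₂' z - φ₂ z) := by simp [norm_mul]
        _ ≤ Sb * D * (Sb * (K * κ)) + Sb * (K * κ) * (Sb * D) := by
            have e1 : norm (φ₁' y - φ₁ y) ≤ Sb * D := by
              rw [← norm_neg]; simpa using hdφ₁ y
            have e2 : norm (φ₂' z - φ₂ z) ≤ Sb * D := by
              rw [← norm_neg]; simpa using hdφ₂ z
            exact add_le_add
              (mul_le_mul e1 (hφ₂b' z) (norm_nonneg _)
                (by positivity))
              (mul_le_mul (hφ₁b y) e2 (norm_nonneg _)
                (by positivity))
    have hdiff : Wapp W φ₁' φ₂' x - Wapp W φ₁ φ₂ x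
        = ∑ y, ∑ z, (W x y z * φ₁' y * φ₂' z - W x y z * φ₁ y * φ₂ z) := by
      simp [Wapp, Finset.sum_sub_distrib]
    rw [hdiff]
    calc norm (∑ y, ∑ z, (W x y z * φ₁' y * φ₂' z - W x y z * φ₁ y * φ₂ z))
        ≤ ∑ y, norm (∑ z, (W x y z * φ₁' y * φ₂' z - W x y z * φ₁ y * φ₂ z)) :=
          norm_sum_le _ _
      _ ≤ ∑ y, ∑ z, norm (W x y z * φ₁' y * φ₂' z - W x y z * φ₁ y * φ₂ z) :=
          Finset.sum_le_sum fun y _ => norm_sum_le _ _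
      _ ≤ ∑ y, ∑ z, norm (W x y z) *
            (Sb * D * (Sb * (K * κ)) + Sb * (K * κ) * (Sb * D)) :=
          Finset.sum_le_sum fun y _ => Finset.sum_le_sum fun z _ => hterm y z
      _ = (∑ y, ∑ z, norm (W x y z)) *
            (Sb * D * (Sb * (K * κ)) + Sb * (K * κ) * (Sb * D)) := by
          rw [Finset.sum_mul]; exact Finset.sum_congr rfl fun y _ => by rw [Finset.sum_mul]
      _ ≤ c := by
          rw [hcdef]
          refine mul_le_mul_of_nonneg_right (hW x) ?_
          positivity
  -- ψ differences in terms of Wapp differences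
  have hψd₁ : ∀ x, ψ₁ x - ψ₁' x = Wapp W₁ φ₁' φ₂' x - Wapp W₁ φ₁ φ₂ x := by
    intro x
    have h1 := heq₁ x; have h2 := heq₁' x
    rw [hψ₁, hψ₁']; linear_combination h1 - h2
  have hψd₂ : ∀ x, ψ₂ x - ψ₂' x = Wapp W₂ φ₁' φ₂' x - Wapp W₂ φ₁ φ₂ x := by
    intro x
    have h1 := heq₂ x; have h2 := heq₂' x
    rw [hψ₂, hψ₂']; linear_combination h1 - h2
  -- contraction: D ≤ c
  have hDc : D ≤ c := by
    rw [hDdef]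
    refine max_le (ciSup_le fun x => ?_) (ciSup_le fun x => ?_)
    · rw [hψd₁ x]; exact hkey W₁ hWrow₁ x
    · rw [hψd₂ x]; exact hkey W₂ hWrow₂ x
  -- the contraction constant is < 1 (times D)
  have hsmall' : Sb ^ 2 * Wb * κ * (2 * K) < 1 :=
    (lt_div_iff₀ (by positivity)).mp hsmall
  have hDzero : D = 0 := by
    by_contra h
    have hDpos : 0 < D := lt_of_le_of_ne hD0 (Ne.symm h)
    have hc' : c = (Sb ^ 2 * Wb * κ * (2 * K)) * D := by rw [hcdef]; ring
    have : c < D := by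
      rw [hc']
      calc (Sb ^ 2 * Wb * κ * (2 * K)) * D < 1 * D :=
            mul_lt_mul_of_pos_right hsmall' hDpos
        _ = D := one_mul D
    linarith [hDc]
  -- conclude ψ = ψ'
  have hψeq₁ : ψ₁ = ψ₁' := by
    funext x
    have h := hD₁ x
    rw [hDzero] at h
    have := le_antisymm h (norm_nonneg _)
    rwa [norm_eq_zero, sub_eq_zero] at this
  have hψeq₂ : ψ₂ = ψ₂' := by
    funext x
    have h := hD₂ x
    rw [hDzero] at h
    have := le_antisymm h (norm_nonneg _)
    rwa [norm_eq_zero, sub_eq_zero] at this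
  constructor
  · rw [← hφ₁, ← hφ₁', hψeq₁]
  · rw [← hφ₂, ← hφ₂', hψeq₂]

end BFKT
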